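/- Let a, b ∈ Δₙ be strictly positive probability vectors, C ∈ ℝ₊^{n×n}, γ > 0, K := exp(−C/γ). Let (f_k, g_k) be the Sinkhorn iterates started from arbitrary f₀, g₀ ∈ ℝⁿ, let P_k := diag(e^{f_k/γ}) K diag(e^{g_k/γ}), and let (f*, g*) be any dual optimal solution (i.e. diag(e^{f*/γ}) K diag(e^{g*/γ}) ∈ Π(a,b)). Then for every k ≥ 2, h(f*, g*) − h(f_k, g_k) ≤ ‖C‖_∞ (‖a − P_k𝟏ₙ‖₁ + ‖b − P_kᵀ𝟏ₙ‖₁). -/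

import Mathlib

/-- The dual entropic OT objective
`h(f,g) = ⟨f,a⟩ + ⟨g,b⟩ − γ Σ_{i,j} exp((f_i + g_j − C_{ij})/γ)`. -/
noncomputable def dualObj {n : ℕ} (a b : Fin n → ℝ) (C : Matrix (Fin n) (Fin n) ℝ)
    (γ : ℝ) (f g : Fin n → ℝ) : ℝ :=
  (∑ i, f i * a i) + (∑ j, g j * b j) -
    γ * ∑ i, ∑ j, Real.exp ((f i + g j - C i j) / γ)

/-- The transport plan `P = diag(e^{f/γ}) K diag(e^{g/γ})` with `K = exp(−C/γ)`. -/
noncomputable def plan {n : ℕ} (C : Matrix (Fin n) (Fin n) ℝ) (γ : ℝ)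
    (f g : Fin n → ℝ) : Matrix (Fin n) (Fin n) ℝ :=
  fun i j => Real.exp (f i / γ) * Real.exp (-C i j / γ) * Real.exp (g j / γ)

/-- `(f k, g k)` is the sequence of Sinkhorn iterates (in dual form): for even `k`,
`f (k+1) = γ log a − γ log (K e^{g k / γ})` and `g (k+1) = g k`; for odd `k`,
`f (k+1) = f k` and `g (k+1) = γ log b − γ log (Kᵀ e^{f k / γ})`,
where `K = exp(−C/γ)`. -/
def SinkhornSeq {n : ℕ} (a b : Fin n → ℝ) (C : Matrix (Fin n) (Fin n) ℝ) (γ : ℝ)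
    (f g : ℕ → Fin n → ℝ) : Prop :=
  ∀ k : ℕ,
    (Even k →
      f (k+1) = (fun i => γ * Real.log (a i) -
        γ * Real.log (∑ j, Real.exp (-C i j / γ) * Real.exp (g k j / γ))) ∧
      g (k+1) = g k) ∧
    (¬ Even k →
      f (k+1) = f k ∧
      g (k+1) = (fun j => γ * Real.log (b j) -
        γ * Real.log (∑ i, Real.exp (-C i j / γ) * Real.exp (f k i / γ))))

section Aux

variable {n : ℕ}

/-- log-sum-exp monotonicity with shift. -/
lemma my_logsum_le [NeZero n] (u v : Fin n → ℝ) (t : ℝ) (h : ∀ j, u j ≤ v j + t) :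
    Real.log (∑ j, Real.exp (u j)) ≤ t + Real.log (∑ j, Real.exp (v j)) := by
  have hv : 0 < ∑ j, Real.exp (v j) :=
    Finset.sum_pos (fun j _ => Real.exp_pos _) Finset.univ_nonempty
  have hu : 0 < ∑ j, Real.exp (u j) :=
    Finset.sum_pos (fun j _ => Real.exp_pos _) Finset.univ_nonempty
  have hle : (∑ j, Real.exp (u j)) ≤ Real.exp t * ∑ j, Real.exp (v j) := by
    rw [Finset.mul_sum]
    refine Finset.sum_le_sum fun j _ => ?_
    rw [← Real.exp_add]
    exact Real.exp_le_exp.mpr (by linarith [h j])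
  calc Real.log (∑ j, Real.exp (u j)) ≤ Real.log (Real.exp t * ∑ j, Real.exp (v j)) :=
        Real.log_le_log hu hle
    _ = t + Real.log (∑ j, Real.exp (v j)) := by
        rw [Real.log_mul (Real.exp_ne_zero t) hv.ne', Real.log_exp]

lemma my_log_S_diff [NeZero n] {C : Matrix (Fin n) (Fin n) ℝ} {γ M : ℝ} (hγ : 0 < γ)
    (hC : ∀ i j, 0 ≤ C i j) (hM : ∀ i j, C i j ≤ M) (w : Fin n → ℝ) (i i' : Fin n) :
    γ * Real.log (∑ j, Real.exp (-C i j / γ) * Real.exp (w j / γ)) -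
      γ * Real.log (∑ j, Real.exp (-C i' j / γ) * Real.exp (w j / γ)) ≤ M := by
  have hrw : ∀ p j, Real.exp (-C p j / γ) * Real.exp (w j / γ)
      = Real.exp (w j / γ - C p j / γ) := by
    intro p j; rw [← Real.exp_add]; ring_nf
  have key : Real.log (∑ j, Real.exp (w j / γ - C i j / γ)) ≤
      M / γ + Real.log (∑ j, Real.exp (w j / γ - C i' j / γ)) := by
    apply my_logsum_le
    intro j
    have h1 : (w j - C i j) / γ ≤ (w j - C i' j + M) / γ :=
      (div_le_div_iff_of_pos_right hγ).mpr (by linarith [hM i' j, hC i j])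
    have e1 : w j / γ - C i j / γ = (w j - C i j) / γ := by ring
    have e2 : (w j - C i' j + M) / γ = w j / γ - C i' j / γ + M / γ := by ring
    linarith
  simp only [hrw]
  have h2 := mul_le_mul_of_nonneg_left key hγ.le
  rw [mul_add] at h2
  have e : γ * (M / γ) = M := by field_simp
  linarith

/-- If `∑ w = 0` and the variation of `v` is at most `2M`, then `∑ v w ≤ M ∑ |w|`. -/
lemma my_sum_mul_le [NeZero n] (v w : Fin n → ℝ) (M : ℝ)
    (hw : ∑ i, w i = 0) (hv : ∀ i i', v i - v i' ≤ 2 * M) :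
    ∑ i, v i * w i ≤ M * ∑ i, |w i| := by
  obtain ⟨imax, _, hmax⟩ := Finset.exists_max_image Finset.univ v Finset.univ_nonempty
  obtain ⟨imin, _, hmin⟩ := Finset.exists_min_image Finset.univ v Finset.univ_nonempty
  set c := (v imax + v imin) / 2 with hc
  have key : ∀ i, |v i - c| ≤ M := by
    intro i
    rw [abs_le]
    constructor
    · have h1 := hv imax i
      have h2 := hmin i (Finset.mem_univ i)
      rw [hc]; linarith
    · have h1 := hv i imin
      have h2 := hmax i (Finset.mem_univ i)
      rw [hc]; linarith
  have e1 : ∑ i, v i * w i = ∑ i, (v i - c) * w i := by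
    rw [← sub_eq_zero]
    rw [← Finset.sum_sub_distrib]
    have : ∀ i, v i * w i - (v i - c) * w i = c * w i := fun i => by ring
    simp only [this, ← Finset.mul_sum, hw, mul_zero]
  rw [e1]
  calc ∑ i, (v i - c) * w i ≤ ∑ i, M * |w i| := by
        refine Finset.sum_le_sum fun i _ => ?_
        calc (v i - c) * w i ≤ |(v i - c) * w i| := le_abs_self _
          _ = |v i - c| * |w i| := abs_mul _ _
          _ ≤ M * |w i| := mul_le_mul_of_nonneg_right (key i) (abs_nonneg _)
    _ = M * ∑ i, |w i| := by rw [Finset.mul_sum]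

lemma plan_eq {C : Matrix (Fin n) (Fin n) ℝ} {γ : ℝ} (hγ : 0 < γ)
    (f g : Fin n → ℝ) (i j : Fin n) :
    plan C γ f g i j = Real.exp ((f i + g j - C i j) / γ) := by
  simp only [plan, ← Real.exp_add]
  congr 1
  field_simp
  ring

/-- Gradient inequality coming from concavity of the dual objective. -/
lemma my_grad_ineq (a b : Fin n → ℝ) (C : Matrix (Fin n) (Fin n) ℝ) {γ : ℝ} (hγ : 0 < γ)
    (fs gs f g : Fin n → ℝ) :
    dualObj a b C γ fs gs - dualObj a b C γ f g ≤
      (∑ i, (fs i - f i) * (a i - ∑ j, plan C γ f g i j)) +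
      ∑ j, (gs j - g j) * (b j - ∑ i, plan C γ f g i j) := by
  have key : ∀ i j, plan C γ f g i j * ((fs i - f i) + (gs j - g j)) ≤
      γ * (Real.exp ((fs i + gs j - C i j) / γ) - Real.exp ((f i + g j - C i j) / γ)) := by
    intro i j
    rw [plan_eq hγ]
    set t := ((fs i - f i) + (gs j - g j)) / γ with ht
    have h1 : (fs i + gs j - C i j) / γ = (f i + g j - C i j) / γ + t := by
      rw [ht]; field_simp; ring
    rw [h1, Real.exp_add]
    have h2 := Real.add_one_le_exp t
    have h3 := (Real.exp_pos ((f i + g j - C i j) / γ)).le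
    have h4 : (fs i - f i) + (gs j - g j) = γ * t := by
      rw [ht]; field_simp
    rw [h4]
    nlinarith [mul_nonneg hγ.le (mul_nonneg h3 (show (0:ℝ) ≤ Real.exp t - 1 - t by linarith))]
  have hsum : ∑ i, ∑ j, plan C γ f g i j * ((fs i - f i) + (gs j - g j)) ≤
      γ * ((∑ i, ∑ j, Real.exp ((fs i + gs j - C i j) / γ)) -
        ∑ i, ∑ j, Real.exp ((f i + g j - C i j) / γ)) := by
    calc ∑ i, ∑ j, plan C γ f g i j * ((fs i - f i) + (gs j - g j))
        ≤ ∑ i, ∑ j, γ * (Real.exp ((fs i + gs j - C i j) / γ) -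
            Real.exp ((f i + g j - C i j) / γ)) :=
          Finset.sum_le_sum fun i _ => Finset.sum_le_sum fun j _ => key i j
      _ = γ * ((∑ i, ∑ j, Real.exp ((fs i + gs j - C i j) / γ)) -
            ∑ i, ∑ j, Real.exp ((f i + g j - C i j) / γ)) := by
          simp only [mul_sub, ← Finset.sum_sub_distrib, Finset.mul_sum]
  have hsplit : (∑ i, (fs i - f i) * ∑ j, plan C γ f g i j) +
      (∑ j, (gs j - g j) * ∑ i, plan C γ f g i j)
      = ∑ i, ∑ j, plan C γ f g i j * ((fs i - f i) + (gs j - g j)) := by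
    have e1 : ∀ i j, plan C γ f g i j * ((fs i - f i) + (gs j - g j))
        = (fs i - f i) * plan C γ f g i j + (gs j - g j) * plan C γ f g i j := fun i j => by ring
    simp only [e1, Finset.sum_add_distrib]
    congr 1
    · simp [Finset.mul_sum]
    · rw [Finset.sum_comm]
      simp [Finset.mul_sum]
  have e2 : ∑ i, (fs i - f i) * (a i - ∑ j, plan C γ f g i j)
      = (∑ i, (fs i - f i) * a i) - ∑ i, (fs i - f i) * ∑ j, plan C γ f g i j := by
    simp [mul_sub, Finset.sum_sub_distrib]
  have e3 : ∑ j, (gs j - g j) * (b j - ∑ i, plan C γ f g i j)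
      = (∑ j, (gs j - g j) * b j) - ∑ j, (gs j - g j) * ∑ i, plan C γ f g i j := by
    simp [mul_sub, Finset.sum_sub_distrib]
  have e4 : ∑ i, (fs i - f i) * a i = (∑ i, fs i * a i) - ∑ i, f i * a i := by
    simp [sub_mul, Finset.sum_sub_distrib]
  have e5 : ∑ j, (gs j - g j) * b j = (∑ j, gs j * b j) - ∑ j, g j * b j := by
    simp [sub_mul, Finset.sum_sub_distrib]
  simp only [dualObj]
  rw [e2, e3, e4, e5]
  linarith [hsum, hsplit]

/-- Every `f k` with `k ≥ 1` is obtained from some `g m` by a Sinkhorn update. -/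
lemma my_f_form {a b : Fin n → ℝ} {C : Matrix (Fin n) (Fin n) ℝ} {γ : ℝ}
    {f g : ℕ → Fin n → ℝ} (hiter : SinkhornSeq a b C γ f g) :
    ∀ k, 1 ≤ k → ∃ m, f k = fun i => γ * Real.log (a i) -
      γ * Real.log (∑ j, Real.exp (-C i j / γ) * Real.exp (g m j / γ)) := by
  intro k
  induction k with
  | zero => omega
  | succ l ih =>
    intro _
    rcases Nat.even_or_odd l with he | ho
    · exact ⟨l, ((hiter l).1 he).1⟩
    · have hl : 1 ≤ l := by
        rcases Nat.eq_zero_or_pos l with rfl | h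
        · simpa using Nat.odd_iff.mp ho
        · exact h
      obtain ⟨m, hm⟩ := ih hl
      rw [((hiter l).2 (Nat.not_even_iff_odd.mpr ho)).1]
      exact ⟨m, hm⟩

/-- Every `g k` with `k ≥ 2` is obtained from some `f m` by a Sinkhorn update. -/
lemma my_g_form {a b : Fin n → ℝ} {C : Matrix (Fin n) (Fin n) ℝ} {γ : ℝ}
    {f g : ℕ → Fin n → ℝ} (hiter : SinkhornSeq a b C γ f g) :
    ∀ k, 2 ≤ k → ∃ m, g k = fun j => γ * Real.log (b j) -
      γ * Real.log (∑ i, Real.exp (-C i j / γ) * Real.exp (f m i / γ)) := by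
  intro k
  induction k with
  | zero => omega
  | succ l ih =>
    intro hl
    rcases Nat.even_or_odd l with he | ho
    · have hl2 : 2 ≤ l := by
        rcases Nat.lt_or_ge l 2 with h | h
        · exfalso
          have hcases : l = 0 ∨ l = 1 := by omega
          rcases hcases with rfl | rfl
          · omega
          · simpa using Nat.even_iff.mp he
        · exact h
      obtain ⟨m, hm⟩ := ih hl2
      rw [((hiter l).1 he).2]
      exact ⟨m, hm⟩
    · exact ⟨l, ((hiter l).2 (Nat.not_even_iff_odd.mpr ho)).2⟩

/-- If `f'` is a Sinkhorn `f`-update from `g'`, then the row marginals are exact. -/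
lemma my_row_eq [NeZero n] {a : Fin n → ℝ} {C : Matrix (Fin n) (Fin n) ℝ} {γ : ℝ}
    (hγ : 0 < γ) (ha0 : ∀ i, 0 < a i) (g' f' : Fin n → ℝ)
    (hf' : f' = fun i => γ * Real.log (a i) -
      γ * Real.log (∑ j, Real.exp (-C i j / γ) * Real.exp (g' j / γ)))
    (i : Fin n) : ∑ j, plan C γ f' g' i j = a i := by
  set S := ∑ j, Real.exp (-C i j / γ) * Real.exp (g' j / γ) with hS
  have hSpos : 0 < S :=
    Finset.sum_pos (fun j _ => mul_pos (Real.exp_pos _) (Real.exp_pos _)) Finset.univ_nonempty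
  have hsum : ∑ j, plan C γ f' g' i j = Real.exp (f' i / γ) * S := by
    rw [hS, Finset.mul_sum]
    refine Finset.sum_congr rfl fun j _ => ?_
    simp only [plan]; ring
  rw [hsum, hf']
  have hdiv : (γ * Real.log (a i) - γ * Real.log S) / γ = Real.log (a i) - Real.log S := by
    field_simp
  simp only [← hS, hdiv]
  rw [Real.exp_sub, Real.exp_log (ha0 i), Real.exp_log hSpos]
  field_simp

/-- If `g'` is a Sinkhorn `g`-update from `f'`, then the column marginals are exact. -/
lemma my_col_eq [NeZero n] {b : Fin n → ℝ} {C : Matrix (Fin n) (Fin n) ℝ} {γ : ℝ}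
    (hγ : 0 < γ) (hb0 : ∀ j, 0 < b j) (f' g' : Fin n → ℝ)
    (hg' : g' = fun j => γ * Real.log (b j) -
      γ * Real.log (∑ i, Real.exp (-C i j / γ) * Real.exp (f' i / γ)))
    (j : Fin n) : ∑ i, plan C γ f' g' i j = b j := by
  set S := ∑ i, Real.exp (-C i j / γ) * Real.exp (f' i / γ) with hS
  have hSpos : 0 < S :=
    Finset.sum_pos (fun i _ => mul_pos (Real.exp_pos _) (Real.exp_pos _)) Finset.univ_nonempty
  have hsum : ∑ i, plan C γ f' g' i j = Real.exp (g' j / γ) * S := by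
    rw [hS, Finset.mul_sum]
    refine Finset.sum_congr rfl fun i _ => ?_
    simp only [plan]; ring
  rw [hsum, hg']
  have hdiv : (γ * Real.log (b j) - γ * Real.log S) / γ = Real.log (b j) - Real.log S := by
    field_simp
  simp only [← hS, hdiv]
  rw [Real.exp_sub, Real.exp_log (hb0 j), Real.exp_log hSpos]
  field_simp

end Aux

/-- **Dual gap bound for Sinkhorn** (Lemma 5 of the paper): for `k ≥ 2` and any
dual optimal solution `(f*, g*)`,
`h(f*,g*) − h(f_k,g_k) ≤ ‖C‖_∞ (‖a − P_k𝟏‖₁ + ‖b − P_kᵀ𝟏‖₁)`. -/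
theorem sinkhorn_dual_gap_bound {n : ℕ} (a b : Fin n → ℝ)
    (C : Matrix (Fin n) (Fin n) ℝ) (γ : ℝ) (hγ : 0 < γ)
    (ha0 : ∀ i, 0 < a i) (hb0 : ∀ j, 0 < b j)
    (ha1 : ∑ i, a i = 1) (hb1 : ∑ j, b j = 1)
    (hC : ∀ i j, 0 ≤ C i j)
    (f g : ℕ → Fin n → ℝ) (hiter : SinkhornSeq a b C γ f g)
    (fs gs : Fin n → ℝ)
    (hfs : ∀ i, ∑ j, plan C γ fs gs i j = a i)
    (hgs : ∀ j, ∑ i, plan C γ fs gs i j = b j)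
    (k : ℕ) (hk : 2 ≤ k) :
    dualObj a b C γ fs gs - dualObj a b C γ (f k) (g k) ≤
      (⨆ i, ⨆ j, |C i j|) *
        ((∑ i, |a i - ∑ j, plan C γ (f k) (g k) i j|) +
          (∑ j, |b j - ∑ i, plan C γ (f k) (g k) i j|)) := by
  rcases Nat.eq_zero_or_pos n with rfl | hn
  · simp at ha1
  haveI : NeZero n := ⟨hn.ne'⟩
  set M := (⨆ i, ⨆ j, |C i j|) with hMdef
  have hM : ∀ i j, C i j ≤ M := by
    intro i j
    have h1 : |C i j| ≤ ⨆ j, |C i j| :=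
      le_ciSup (f := fun j => |C i j|) (Set.Finite.bddAbove (Set.finite_range _)) j
    have h2 : (⨆ j, |C i j|) ≤ M :=
      le_ciSup (f := fun i => ⨆ j, |C i j|) (Set.Finite.bddAbove (Set.finite_range _)) i
    calc C i j ≤ |C i j| := le_abs_self _
      _ ≤ ⨆ j, |C i j| := h1
      _ ≤ M := h2
  -- total mass of the plan is one
  obtain ⟨l, rfl⟩ : ∃ l, k = l + 1 := ⟨k - 1, by omega⟩
  have hmarg : (∀ i, ∑ j, plan C γ (f (l+1)) (g (l+1)) i j = a i) ∨
      (∀ j, ∑ i, plan C γ (f (l+1)) (g (l+1)) i j = b j) := by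
    rcases Nat.even_or_odd l with he | ho
    · left
      intro i
      have h1 := ((hiter l).1 he).1
      have h2 := ((hiter l).1 he).2
      rw [h2]
      exact my_row_eq hγ ha0 (g l) (f (l+1)) h1 i
    · right
      intro j
      have h1 := ((hiter l).2 (Nat.not_even_iff_odd.mpr ho)).2
      have h2 := ((hiter l).2 (Nat.not_even_iff_odd.mpr ho)).1
      rw [h2]
      exact my_col_eq hγ hb0 (f l) (g (l+1)) h1 j
  have hrowsum : ∑ i, (a i - ∑ j, plan C γ (f (l+1)) (g (l+1)) i j) = 0 := by
    rw [Finset.sum_sub_distrib, ha1, sub_eq_zero]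
    rcases hmarg with h | h
    · rw [Finset.sum_congr rfl fun i _ => h i, ha1]
    · exact ((Finset.sum_comm).trans ((Finset.sum_congr rfl fun j _ => h j).trans hb1)).symm
  have hcolsum : ∑ j, (b j - ∑ i, plan C γ (f (l+1)) (g (l+1)) i j) = 0 := by
    rw [Finset.sum_sub_distrib, hb1, sub_eq_zero]
    rcases hmarg with h | h
    · rw [Finset.sum_comm, Finset.sum_congr rfl fun i _ => h i, ha1]
    · rw [Finset.sum_congr rfl fun j _ => h j, hb1]
  -- variation bounds
  have hfsform : ∀ i, fs i = γ * Real.log (a i) -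
      γ * Real.log (∑ j, Real.exp (-C i j / γ) * Real.exp (gs j / γ)) := by
    intro i
    set T := ∑ j, Real.exp (-C i j / γ) * Real.exp (gs j / γ) with hT
    have hTpos : 0 < T :=
      Finset.sum_pos (fun j _ => mul_pos (Real.exp_pos _) (Real.exp_pos _))
        Finset.univ_nonempty
    have h1 : Real.exp (fs i / γ) * T = a i := by
      rw [← hfs i, hT, Finset.mul_sum]
      refine Finset.sum_congr rfl fun j _ => ?_
      simp only [plan]; ring
    have h2 : Real.exp (fs i / γ) = a i / T := by
      field_simp at h1 ⊢; linarith
    have h3 := congrArg Real.log h2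
    rw [Real.log_exp, Real.log_div (ha0 i).ne' hTpos.ne'] at h3
    have h4 : fs i = γ * (fs i / γ) := by field_simp
    rw [h4, h3]; ring
  have hgsform : ∀ j, gs j = γ * Real.log (b j) -
      γ * Real.log (∑ i, Real.exp (-C i j / γ) * Real.exp (fs i / γ)) := by
    intro j
    set T := ∑ i, Real.exp (-C i j / γ) * Real.exp (fs i / γ) with hT
    have hTpos : 0 < T :=
      Finset.sum_pos (fun i _ => mul_pos (Real.exp_pos _) (Real.exp_pos _))
        Finset.univ_nonempty
    have h1 : Real.exp (gs j / γ) * T = b j := by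
      rw [← hgs j, hT, Finset.mul_sum]
      refine Finset.sum_congr rfl fun i _ => ?_
      simp only [plan]; ring
    have h2 : Real.exp (gs j / γ) = b j / T := by
      field_simp at h1 ⊢; linarith
    have h3 := congrArg Real.log h2
    rw [Real.log_exp, Real.log_div (hb0 j).ne' hTpos.ne'] at h3
    have h4 : gs j = γ * (gs j / γ) := by field_simp
    rw [h4, h3]; ring
  obtain ⟨m1, hm1⟩ := my_f_form hiter (l + 1) (by omega)
  obtain ⟨m2, hm2⟩ := my_g_form hiter (l + 1) (by omega)
  have hvf : ∀ i i', (fs i - f (l+1) i) - (fs i' - f (l+1) i') ≤ 2 * M := by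
    intro i i'
    have e : ∀ p, fs p - f (l+1) p =
        (γ * Real.log (∑ j, Real.exp (-C p j / γ) * Real.exp (g m1 j / γ)) -
         γ * Real.log (∑ j, Real.exp (-C p j / γ) * Real.exp (gs j / γ))) := by
      intro p
      simp only [hfsform p, hm1]
      ring
    rw [e i, e i']
    have h1 := my_log_S_diff hγ hC hM (g m1) i i'
    have h2 := my_log_S_diff hγ hC hM gs i' i
    linarith
  have hvg : ∀ j j', (gs j - g (l+1) j) - (gs j' - g (l+1) j') ≤ 2 * M := by
    intro j j'
    have e : ∀ p, gs p - g (l+1) p =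
        (γ * Real.log (∑ i, Real.exp (-C i p / γ) * Real.exp (f m2 i / γ)) -
         γ * Real.log (∑ i, Real.exp (-C i p / γ) * Real.exp (fs i / γ))) := by
      intro p
      simp only [hgsform p, hm2]
      ring
    rw [e j, e j']
    have h1 := my_log_S_diff (C := fun p q => C q p) hγ (fun p q => hC q p)
      (fun p q => hM q p) (f m2) j j'
    have h2 := my_log_S_diff (C := fun p q => C q p) hγ (fun p q => hC q p)
      (fun p q => hM q p) fs j' j
    linarith
  have hfbound := my_sum_mul_le (fun i => fs i - f (l+1) i)
    (fun i => a i - ∑ j, plan C γ (f (l+1)) (g (l+1)) i j) M hrowsum hvf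
  have hgbound := my_sum_mul_le (fun j => gs j - g (l+1) j)
    (fun j => b j - ∑ i, plan C γ (f (l+1)) (g (l+1)) i j) M hcolsum hvg
  have hgrad := my_grad_ineq a b C hγ fs gs (f (l+1)) (g (l+1))
  calc dualObj a b C γ fs gs - dualObj a b C γ (f (l+1)) (g (l+1))
      ≤ (∑ i, (fs i - f (l+1) i) * (a i - ∑ j, plan C γ (f (l+1)) (g (l+1)) i j)) +
        ∑ j, (gs j - g (l+1) j) * (b j - ∑ i, plan C γ (f (l+1)) (g (l+1)) i j) := hgrad
    _ ≤ M * (∑ i, |a i - ∑ j, plan C γ (f (l+1)) (g (l+1)) i j|) +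
        M * (∑ j, |b j - ∑ i, plan C γ (f (l+1)) (g (l+1)) i j|) := add_le_add hfbound hgbound
    _ = M * ((∑ i, |a i - ∑ j, plan C γ (f (l+1)) (g (l+1)) i j|) +
          (∑ j, |b j - ∑ i, plan C γ (f (l+1)) (g (l+1)) i j|)) := by ring
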